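/- Let p : ℝ^d → (0,∞) be C² with ∫_{ℝ^d} p dx = 1, let h : ℝ^d → ℝ be continuous with ∫ h² p dx < ∞, and set ĥ := ∫ h p dx. Let K : ℝ^d → ℝ^d be C² with ∑_i ∂(pK_i)/∂x_i = −(h − ĥ)p everywhere, and let u : ℝ^d → ℝ^d be C¹ such that for some constant C₁ and every x: ∑_i ∂(pu_i)/∂x_i = (1/2)h²p + (1/2)∑_{i,j}K_iK_j ∂²p/∂x_i∂x_j − (p/2)(∑_i K_i ∂(log p)/∂x_i)² + p∑_{i,j}K_i(∂K_j/∂x_i)(∂(log p)/∂x_j) + p∑_j K_j ∂/∂x_j(∑_i ∂K_i/∂x_i) + (p/2)∑_{i,j}(∂K_j/∂x_i)(∂K_i/∂x_j) + C₁ p. Assume moreover that ∑_i ∂(pu_i)/∂x_i and ∑_{i,j} ∂²(pK_iK_j)/∂x_i∂x_j are Lebesgue integrable on ℝ^d with ∫ ∑_i ∂(pu_i)/∂x_i dx = 0 and ∫ ∑_{i,j} ∂²(pK_iK_j)/∂x_i∂x_j dx = 0. Then C₁ = −ĥ²/2 and, for every x, ∑_i ∂(pu_i)/∂x_i = (h −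 ĥ) ĥ p + (1/2) ∑_{i,j=1}^d ∂²(p K_i K_j)/∂x_i∂x_j. -/

import Mathlib

open MeasureTheory

/-- Partial derivative `∂f/∂x_i` of a scalar function on `ℝ^d`. -/
noncomputable def pd {d : ℕ} (i : Fin d) (f : (Fin d → ℝ) → ℝ) (x : Fin d → ℝ) : ℝ :=
  fderiv ℝ f x (Pi.single i 1)

variable {d : ℕ}

lemma pd_congr (i : Fin d) {f g : (Fin d → ℝ) → ℝ} (h : ∀ y, f y = g y) (x : Fin d → ℝ) :
    pd i f x = pd i g x := by
  have : f = g := funext h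
  rw [this]

lemma pd_add (i : Fin d) {f g : (Fin d → ℝ) → ℝ} {x : Fin d → ℝ}
    (hf : DifferentiableAt ℝ f x) (hg : DifferentiableAt ℝ g x) :
    pd i (fun y => f y + g y) x = pd i f x + pd i g x := by
  simp [pd, fderiv_fun_add hf hg]

lemma pd_mul (i : Fin d) {f g : (Fin d → ℝ) → ℝ} {x : Fin d → ℝ}
    (hf : DifferentiableAt ℝ f x) (hg : DifferentiableAt ℝ g x) :
    pd i (fun y => f y * g y) x = pd i f x * g x + f x * pd i g x := by
  simp [pd, fderiv_fun_mul hf hg]; ring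

lemma pd_sum (i : Fin d) {n : ℕ} {f : Fin n → (Fin d → ℝ) → ℝ} {x : Fin d → ℝ}
    (hf : ∀ j, DifferentiableAt ℝ (f j) x) :
    pd i (fun y => ∑ j, f j y) x = ∑ j, pd i (f j) x := by
  simp [pd, fderiv_fun_sum (fun j _ => hf j)]

lemma pd_log {p : (Fin d → ℝ) → ℝ} (i : Fin d) {x : Fin d → ℝ}
    (hp : DifferentiableAt ℝ p x) (hpx : p x ≠ 0) :
    pd i (fun y => Real.log (p y)) x = pd i p x / p x := by
  have h1 : HasFDerivAt (fun y => Real.log (p y)) ((p x)⁻¹ • fderiv ℝ p x) x :=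
    (Real.hasDerivAt_log hpx).comp_hasFDerivAt x hp.hasFDerivAt
  simp [pd, h1.fderiv, div_eq_inv_mul]

lemma contDiff_pd {f : (Fin d → ℝ) → ℝ} (j : Fin d) (hf : ContDiff ℝ 2 f) :
    ContDiff ℝ 1 (pd j f) := by
  have h1 : ContDiff ℝ 1 (fderiv ℝ f) := hf.fderiv_right (by norm_num)
  exact (ContinuousLinearMap.apply ℝ ℝ (Pi.single j 1 : Fin d → ℝ)).contDiff.comp h1

lemma pd_comm {f : (Fin d → ℝ) → ℝ} (i j : Fin d) (hf : ContDiff ℝ 2 f) (x : Fin d → ℝ) :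
    pd i (pd j f) x = pd j (pd i f) x := by
  have hsymm : IsSymmSndFDerivAt ℝ f x := hf.contDiffAt.isSymmSndFDerivAt (by simp [minSmoothness_of_isRCLikeNormedField])
  have hd : DifferentiableAt ℝ (fderiv ℝ f) x :=
    ((hf.fderiv_right (m := 1) (by norm_num)).differentiable one_ne_zero) x
  have key : ∀ v : Fin d → ℝ, fderiv ℝ (fun y => fderiv ℝ f y v) x =
      (fderiv ℝ (fderiv ℝ f) x).flip v := by
    intro v
    have := fderiv_clm_apply (c := fderiv ℝ f) (u := fun _ => v) hd (differentiableAt_const v)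
    simpa using this
  show fderiv ℝ (fun y => fderiv ℝ f y (Pi.single j 1)) x (Pi.single i 1) = _
  rw [key]
  show fderiv ℝ (fderiv ℝ f) x (Pi.single i 1) (Pi.single j 1) = _
  rw [hsymm.eq]
  show _ = fderiv ℝ (fun y => fderiv ℝ f y (Pi.single i 1)) x (Pi.single j 1)
  rw [key]
  rfl

section main
variable (p : (Fin d → ℝ) → ℝ) (K : (Fin d → ℝ) → (Fin d → ℝ))

-- names for the atoms
noncomputable def Aat (x : Fin d → ℝ) : ℝ := ∑ i, ∑ j, K x i * K x j * pd i (pd j p) x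
noncomputable def Bat (x : Fin d → ℝ) : ℝ :=
  ∑ i, ∑ j, K x i * pd i (fun y => K y j) x * pd j p x
noncomputable def Sat (x : Fin d → ℝ) : ℝ := ∑ i, pd i (fun z => K z i) x
noncomputable def Qat (x : Fin d → ℝ) : ℝ := ∑ i, K x i * pd i p x
noncomputable def Cat (x : Fin d → ℝ) : ℝ :=
  ∑ i, ∑ j, pd i (fun y => K y j) x * pd j (fun y => K y i) x
noncomputable def KdS (x : Fin d → ℝ) : ℝ :=
  ∑ j, K x j * pd j (fun y => ∑ i, pd i (fun z => K z i) y) x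

/-- The key calculus identity for the double divergence of `p K Kᵀ`. -/
lemma keyE (hp : ContDiff ℝ 2 p) (hK : ContDiff ℝ 2 K) (x : Fin d → ℝ) :
    (∑ i, ∑ j, pd i (pd j (fun y => p y * K y i * K y j)) x)
      = Aat p K x + 2 * (Sat K x * Qat p K x) + 2 * Bat p K x
        + 2 * (p x * KdS K x) + p x * Cat K x + p x * (Sat K x)^2 := by
  have hpd : Differentiable ℝ p := hp.differentiable two_ne_zero
  have hK2 : ∀ i, ContDiff ℝ 2 (fun y => K y i) := fun i => contDiff_pi.mp hK i
  have hKd : ∀ i, Differentiable ℝ (fun y => K y i) := fun i => (hK2 i).differentiable two_ne_zero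
  have hdp2 : ∀ j, Differentiable ℝ (pd j p) := fun j => (contDiff_pd j hp).differentiable one_ne_zero
  have hdK2 : ∀ i j : Fin d, Differentiable ℝ (pd j (fun y => K y i)) := fun i j =>
    (contDiff_pd j (hK2 i)).differentiable one_ne_zero
  -- step 1: first-order expansion as functions
  have step1 : ∀ (i j : Fin d) (y : Fin d → ℝ),
      pd j (fun z => p z * K z i * K z j) y
        = (pd j p y * K y i + p y * pd j (fun z => K z i) y) * K y j
          + (p y * K y i) * pd j (fun z => K z j) y := by
    intro i j y
    rw [pd_mul (f := fun z => p z * K z i) (g := fun z => K z j) j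
      ((hpd y).mul (hKd i y)) (hKd j y)]
    rw [pd_mul (f := p) (g := fun z => K z i) j (hpd y) (hKd i y)]
  -- step 2: second-order expansion at x
  have step2 : ∀ i j : Fin d,
      pd i (pd j (fun y => p y * K y i * K y j)) x
        = pd i (pd j p) x * K x i * K x j
          + pd j p x * pd i (fun z => K z i) x * K x j
          + pd i p x * pd j (fun z => K z i) x * K x j
          + p x * pd i (pd j (fun z => K z i)) x * K x j
          + pd j p x * K x i * pd i (fun z => K z j) x
          + p x * pd j (fun z => K z i) x * pd i (fun z => K z j) x
          + pd i p x * K x i * pd j (fun z => K z j) x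
          + p x * pd i (fun z => K z i) x * pd j (fun z => K z j) x
          + p x * K x i * pd i (pd j (fun z => K z j)) x := by
    intro i j
    rw [pd_congr i (step1 i j) x]
    have d1 : DifferentiableAt ℝ (fun y => pd j p y * K y i) x := ((hdp2 j) x).mul (hKd i x)
    have d2 : DifferentiableAt ℝ (fun y => p y * pd j (fun z => K z i) y) x :=
      (hpd x).mul ((hdK2 i j) x)
    have d3 : DifferentiableAt ℝ (fun y => pd j p y * K y i + p y * pd j (fun z => K z i) y) x :=
      d1.add d2
    have d4 : DifferentiableAt ℝ (fun y => p y * K y i) x := (hpd x).mul (hKd i x)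
    rw [pd_add (f := fun y => (pd j p y * K y i + p y * pd j (fun z => K z i) y) * K y j)
      (g := fun y => p y * K y i * pd j (fun z => K z j) y) i (d3.mul (hKd j x)) (d4.mul ((hdK2 j j) x))]
    rw [pd_mul (f := fun y => pd j p y * K y i + p y * pd j (fun z => K z i) y)
      (g := fun z => K z j) i d3 (hKd j x)]
    rw [pd_mul (f := fun y => p y * K y i) (g := pd j (fun z => K z j)) i d4 ((hdK2 j j) x)]
    rw [pd_add i d1 d2]
    rw [pd_mul (f := pd j p) (g := fun z => K z i) i ((hdp2 j) x) (hKd i x)]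
    rw [pd_mul (f := p) (g := pd j (fun z => K z i)) i (hpd x) ((hdK2 i j) x)]
    rw [pd_mul (f := p) (g := fun z => K z i) i (hpd x) (hKd i x)]
    ring
  have hdSsum : ∀ (a : Fin d),
      pd a (fun y => ∑ i, pd i (fun z => K z i) y) x = ∑ b, pd a (pd b (fun z => K z b)) x :=
    fun a => pd_sum a (fun b => (hdK2 b b) x)
  have e1 : (∑ i, ∑ j, (pd i (pd j p) x * K x i * K x j)) = Aat p K x :=
    Finset.sum_congr rfl fun i _ => Finset.sum_congr rfl fun j _ => by ring
  have e2 : (∑ i, ∑ j, pd j p x * pd i (fun z => K z i) x * K x j)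
      = Sat K x * Qat p K x := by
    rw [Sat, Qat, Fintype.sum_mul_sum]
    exact Finset.sum_congr rfl fun i _ => Finset.sum_congr rfl fun j _ => by ring
  have e3 : (∑ i, ∑ j, pd i p x * pd j (fun z => K z i) x * K x j) = Bat p K x := by
    rw [Finset.sum_comm, Bat]
    exact Finset.sum_congr rfl fun a _ => Finset.sum_congr rfl fun b _ => by ring
  have e4 : (∑ i, ∑ j, p x * pd i (pd j (fun z => K z i)) x * K x j)
      = p x * KdS K x := by
    rw [Finset.sum_comm, KdS, Finset.mul_sum]
    refine Finset.sum_congr rfl fun a _ => ?_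
    rw [hdSsum a, Finset.mul_sum, Finset.mul_sum]
    refine Finset.sum_congr rfl fun b _ => ?_
    rw [pd_comm b a (hK2 b) x]
    ring
  have e5 : (∑ i, ∑ j, pd j p x * K x i * pd i (fun z => K z j) x) = Bat p K x := by
    rw [Bat]
    exact Finset.sum_congr rfl fun i _ => Finset.sum_congr rfl fun j _ => by ring
  have e6 : (∑ i, ∑ j, p x * pd j (fun z => K z i) x * pd i (fun z => K z j) x)
      = p x * Cat K x := by
    rw [Cat, Finset.mul_sum]
    refine Finset.sum_congr rfl fun i _ => ?_
    rw [Finset.mul_sum]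
    exact Finset.sum_congr rfl fun j _ => by ring
  have e7 : (∑ i, ∑ j, pd i p x * K x i * pd j (fun z => K z j) x)
      = Qat p K x * Sat K x := by
    rw [Qat, Sat, Fintype.sum_mul_sum]
    exact Finset.sum_congr rfl fun i _ => Finset.sum_congr rfl fun j _ => by ring
  have e8 : (∑ i, ∑ j, p x * pd i (fun z => K z i) x * pd j (fun z => K z j) x)
      = p x * (Sat K x)^2 := by
    rw [Sat, sq, Fintype.sum_mul_sum, Finset.mul_sum]
    refine Finset.sum_congr rfl fun i _ => ?_
    rw [Finset.mul_sum]
    exact Finset.sum_congr rfl fun j _ => by ring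
  have e9 : (∑ i, ∑ j, p x * K x i * pd i (pd j (fun z => K z j)) x)
      = p x * KdS K x := by
    rw [KdS, Finset.mul_sum]
    refine Finset.sum_congr rfl fun a _ => ?_
    rw [hdSsum a, Finset.mul_sum, Finset.mul_sum]
    exact Finset.sum_congr rfl fun b _ => by ring
  calc (∑ i, ∑ j, pd i (pd j (fun y => p y * K y i * K y j)) x)
      = ∑ i, ∑ j, (pd i (pd j p) x * K x i * K x j
          + pd j p x * pd i (fun z => K z i) x * K x j
          + pd i p x * pd j (fun z => K z i) x * K x j
          + p x * pd i (pd j (fun z => K z i)) x * K x j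
          + pd j p x * K x i * pd i (fun z => K z j) x
          + p x * pd j (fun z => K z i) x * pd i (fun z => K z j) x
          + pd i p x * K x i * pd j (fun z => K z j) x
          + p x * pd i (fun z => K z i) x * pd j (fun z => K z j) x
          + p x * K x i * pd i (pd j (fun z => K z j)) x) :=
      Finset.sum_congr rfl fun i _ => Finset.sum_congr rfl fun j _ => step2 i j
    _ = _ := by
      simp only [Finset.sum_add_distrib]
      rw [e1, e2, e3, e4, e5, e6, e7, e8, e9]
      ring
end main


/-- the control-input equation of Theorem 2 of the paper.
Let `p` be a C² probability density, `h` continuous with `∫ h² p < ∞`, `ĥ = ∫ h p`,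
`K` C² satisfying the gain equation `div(pK) = −(h−ĥ)p`, and `u` C¹ satisfying the
once-integrated `O(Δt)` equation (46) with an undetermined constant `C₁`.  If
`div(pu)` and `∑_{i,j} ∂²_{ij}(pK_iK_j)` are integrable with vanishing integrals, then
`C₁ = −ĥ²/2` and `div(pu) = (h−ĥ)ĥp + (1/2)∑_{i,j} ∂²_{ij}(pK_iK_j)` everywhere. -/
theorem stmt7 {d : ℕ}
    (p : (Fin d → ℝ) → ℝ) (hp : ContDiff ℝ 2 p) (hppos : ∀ x, 0 < p x)
    (hpint : ∫ x, p x = 1)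
    (h : (Fin d → ℝ) → ℝ) (hh : Continuous h)
    (hh2 : Integrable (fun x => (h x) ^ 2 * p x))
    (hhat : ℝ) (hhat_def : hhat = ∫ x, h x * p x)
    (K : (Fin d → ℝ) → (Fin d → ℝ)) (hK : ContDiff ℝ 2 K)
    (hKeq : ∀ x : Fin d → ℝ,
      (∑ i, pd i (fun y => p y * K y i) x) = -(h x - hhat) * p x)
    (u : (Fin d → ℝ) → (Fin d → ℝ)) (hu : ContDiff ℝ 1 u)
    (C₁ : ℝ)
    (hueq : ∀ x : Fin d → ℝ,
      (∑ i, pd i (fun y => p y * u y i) x)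
        = (1 / 2) * (h x) ^ 2 * p x
          + (1 / 2) * ∑ i, ∑ j, K x i * K x j * pd i (pd j p) x
          - (p x / 2) * (∑ i, K x i * pd i (fun y => Real.log (p y)) x) ^ 2
          + p x * ∑ i, ∑ j, K x i * pd i (fun y => K y j) x * pd j (fun y => Real.log (p y)) x
          + p x * ∑ j, K x j * pd j (fun y => ∑ i, pd i (fun z => K z i) y) x
          + (p x / 2) * ∑ i, ∑ j, pd i (fun y => K y j) x * pd j (fun y => K y i) x
          + C₁ * p x)
    (huint : Integrable (fun x => ∑ i, pd i (fun y => p y * u y i) x))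
    (huint0 : ∫ x, (∑ i, pd i (fun y => p y * u y i) x) = 0)
    (hKKint : Integrable (fun x => ∑ i, ∑ j, pd i (pd j (fun y => p y * K y i * K y j)) x))
    (hKKint0 : ∫ x, (∑ i, ∑ j, pd i (pd j (fun y => p y * K y i * K y j)) x) = 0) :
    C₁ = -hhat ^ 2 / 2 ∧
      ∀ x : Fin d → ℝ,
        (∑ i, pd i (fun y => p y * u y i) x)
          = (h x - hhat) * hhat * p x
            + (1 / 2) * ∑ i, ∑ j, pd i (pd j (fun y => p y * K y i * K y j)) x := by
  have hne : ∀ x, p x ≠ 0 := fun x => ne_of_gt (hppos x)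
  have hpd : Differentiable ℝ p := hp.differentiable two_ne_zero
  have hK2 : ∀ i, ContDiff ℝ 2 (fun y => K y i) := fun i => contDiff_pi.mp hK i
  have hKd : ∀ i, Differentiable ℝ (fun y => K y i) := fun i => (hK2 i).differentiable two_ne_zero
  -- rewrite the log-derivative sums
  have lg : ∀ x, (∑ i, K x i * pd i (fun y => Real.log (p y)) x)
      = (∑ i, K x i * pd i p x) / p x := by
    intro x
    rw [Finset.sum_div]
    refine Finset.sum_congr rfl fun i _ => ?_
    rw [pd_log i (hpd x) (hne x)]; ring
  have lgB : ∀ x, (∑ i, ∑ j, K x i * pd i (fun y => K y j) x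
        * pd j (fun y => Real.log (p y)) x)
      = (∑ i, ∑ j, K x i * pd i (fun y => K y j) x * pd j p x) / p x := by
    intro x
    rw [Finset.sum_div]
    refine Finset.sum_congr rfl fun i _ => ?_
    rw [Finset.sum_div]
    refine Finset.sum_congr rfl fun j _ => ?_
    rw [pd_log j (hpd x) (hne x)]; ring
  -- the gain equation in divergence-expanded form
  have hKeq' : ∀ x, (∑ i, K x i * pd i p x)
      + p x * (∑ i, pd i (fun z => K z i) x) = -(h x - hhat) * p x := by
    intro x
    rw [← hKeq x, Finset.mul_sum, ← Finset.sum_add_distrib]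
    refine Finset.sum_congr rfl fun i _ => ?_
    rw [pd_mul (f := p) (g := fun z => K z i) i (hpd x) (hKd i x)]
    ring
  -- the pointwise master identity
  have main : ∀ x, (∑ i, pd i (fun y => p y * u y i) x)
      = (h x - hhat) * hhat * p x
        + (1 / 2) * (∑ i, ∑ j, pd i (pd j (fun y => p y * K y i * K y j)) x)
        + (C₁ + hhat ^ 2 / 2) * p x := by
    intro x
    have hE := keyE p K hp hK x
    simp only [Aat, Bat, Sat, Qat, Cat, KdS] at hE
    rw [hueq x, lg x, lgB x, hE]
    have hsq : ((∑ i, K x i * pd i p x) + p x * (∑ i, pd i (fun z => K z i) x)) ^ 2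
        = (h x - hhat) ^ 2 * p x ^ 2 := by rw [hKeq' x]; ring
    field_simp [hne x]
    linear_combination (-1 : ℝ) * hsq
  -- integrability facts
  have hpInt : Integrable p := by
    by_contra hc
    rw [MeasureTheory.integral_undef hc] at hpint
    norm_num at hpint
  have hhpInt : Integrable (fun x => h x * p x) := by
    refine (hh2.add hpInt).mono' ((hh.mul hp.continuous).aestronglyMeasurable) ?_
    filter_upwards with x
    have hx := hppos x
    simp only [Pi.add_apply]
    rw [Real.norm_eq_abs, abs_mul, abs_of_pos hx]
    nlinarith [sq_nonneg (|h x| - 1), sq_abs (h x), abs_nonneg (h x)]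
  have hfun : (fun x => ∑ i, pd i (fun y => p y * u y i) x)
      = fun x => (h x * p x) * hhat + (-(hhat ^ 2)) * p x
          + (1 / 2) * (∑ i, ∑ j, pd i (pd j (fun y => p y * K y i * K y j)) x)
          + (C₁ + hhat ^ 2 / 2) * p x := funext fun x => by rw [main x]; ring
  have i1 : Integrable (fun x => (h x * p x) * hhat) := hhpInt.mul_const _
  have i2 : Integrable (fun x => (-(hhat ^ 2)) * p x) := hpInt.const_mul _
  have i3 : Integrable (fun x => (1 / 2 : ℝ)
      * (∑ i, ∑ j, pd i (pd j (fun y => p y * K y i * K y j)) x)) := hKKint.const_mul _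
  have i4 : Integrable (fun x => (C₁ + hhat ^ 2 / 2) * p x) := hpInt.const_mul _
  have s1 : ∫ x, ((h x * p x) * hhat + (-(hhat ^ 2)) * p x)
      = hhat * hhat + (-(hhat ^ 2)) * 1 := by
    rw [integral_add i1 i2, integral_mul_const, integral_const_mul, ← hhat_def, hpint]
  have s2 : ∫ x, ((h x * p x) * hhat + (-(hhat ^ 2)) * p x
        + (1 / 2) * (∑ i, ∑ j, pd i (pd j (fun y => p y * K y i * K y j)) x))
      = hhat * hhat + (-(hhat ^ 2)) * 1 + (1 / 2) * 0 := by
    have e := integral_add (μ := volume) (i1.add i2) i3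
    simp only [Pi.add_apply] at e
    rw [e, s1, integral_const_mul, hKKint0]
  have s3 : ∫ x, ((h x * p x) * hhat + (-(hhat ^ 2)) * p x
        + (1 / 2) * (∑ i, ∑ j, pd i (pd j (fun y => p y * K y i * K y j)) x)
        + (C₁ + hhat ^ 2 / 2) * p x)
      = hhat * hhat + (-(hhat ^ 2)) * 1 + (1 / 2) * 0 + (C₁ + hhat ^ 2 / 2) * 1 := by
    have e := integral_add (μ := volume) ((i1.add i2).add i3) i4
    simp only [Pi.add_apply] at e
    rw [e, s2, integral_const_mul, hpint]
  have h0 := huint0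
  rw [hfun, s3] at h0
  have hc0 : C₁ + hhat ^ 2 / 2 = 0 := by linarith [h0]
  refine ⟨by linarith [hc0], fun x => ?_⟩
  rw [main x, hc0]
  ring
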